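/- Let H be a real Hilbert space and let B be a bounded self-adjoint linear operator on H which is negative semi-definite, i.e. ⟨B v, v⟩ ≤ 0 for all v ∈ H. Let k ≥ 1 and let v₁, …, v_k ∈ H. For each j ∈ {1, …, k}, let G_j be the k × k real matrix whose (a, b) entry equals ⟨B v_j, v_b⟩ if a = j, and equals ⟨v_a, v_b⟩ if a ≠ j. Then Σ_{j=1}^k det G_j ≤ 0. (This expresses that the operator B̂^{(k)}(v₁ ∧ ⋯ ∧ v_k) = Σ_j v₁ ∧ ⋯ ∧ B v_j ∧ ⋯ ∧ v_k on the k-th wedge power of H is negative semi-definite on k-blades, since ⟨B̂^{(k)}(v₁ ∧ ⋯ ∧ v_k), v₁ ∧ ⋯ ∧ v_k⟩ = Σ_j det G_j.) -/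

import Mathlib

open Matrix

open scoped RealInnerProductSpace

section Aux

variable {n : Type*} [Fintype n] [DecidableEq n]

private lemma psd_trace_nonneg' {Q : Matrix n n ℝ} (hQ : Q.PosSemidef) : 0 ≤ Q.trace := by
  rw [Matrix.trace]
  apply Finset.sum_nonneg
  intro i _
  have := hQ.dotProduct_mulVec_nonneg (Pi.single i 1)
  simpa [dotProduct, Matrix.mulVec, Pi.single_apply, Finset.sum_ite_eq,
    Matrix.diag] using this

private lemma adjugate_posSemidef' {G : Matrix n n ℝ} (hG : G.PosSemidef) :
    (adjugate G).PosSemidef := by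
  set U : Matrix n n ℝ := (hG.1.eigenvectorUnitary : Matrix n n ℝ) with hU
  have hUU : star U * U = 1 := (Matrix.mem_unitaryGroup_iff').mp (hG.1.eigenvectorUnitary).2
  have hUU' : U * star U = 1 := (Matrix.mem_unitaryGroup_iff).mp (hG.1.eigenvectorUnitary).2
  have hdet : det (star U) * det U = 1 := by
    rw [← det_mul, hUU, det_one]
  have hadjU : adjugate U = det U • star U := by
    calc adjugate U = 1 * adjugate U := (one_mul _).symm
    _ = (star U * U) * adjugate U := by rw [hUU]
    _ = star U * (U * adjugate U) := by rw [mul_assoc]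
    _ = star U * (det U • 1) := by rw [mul_adjugate]
    _ = det U • star U := by rw [Matrix.mul_smul, mul_one]
  have hadjsU : adjugate (star U) = det (star U) • U := by
    calc adjugate (star U) = 1 * adjugate (star U) := (one_mul _).symm
    _ = (U * star U) * adjugate (star U) := by rw [hUU']
    _ = U * (star U * adjugate (star U)) := by rw [mul_assoc]
    _ = U * (det (star U) • 1) := by rw [mul_adjugate]
    _ = det (star U) • U := by rw [Matrix.mul_smul, mul_one]
  have hspec := hG.1.spectral_theorem
  set D : Matrix n n ℝ := diagonal (RCLike.ofReal ∘ hG.1.eigenvalues) with hD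
  have hadj : adjugate G = U * adjugate D * star U := by
    calc adjugate G = adjugate (U * D * star U) := by rw [hspec, Unitary.conjStarAlgAut_apply]
    _ = adjugate (star U) * (adjugate D * adjugate U) := by
        rw [adjugate_mul_distrib, adjugate_mul_distrib]
    _ = (det (star U) • U) * (adjugate D * (det U • star U)) := by rw [hadjU, hadjsU]
    _ = (det (star U) * det U) • (U * (adjugate D * star U)) := by
        rw [Matrix.smul_mul, Matrix.mul_smul, Matrix.mul_smul, smul_smul]
    _ = U * adjugate D * star U := by rw [hdet, one_smul, mul_assoc]
  rw [hadj, Matrix.star_eq_conjTranspose]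
  have hDpsd : (adjugate D).PosSemidef := by
    rw [hD, adjugate_diagonal]
    refine Matrix.posSemidef_diagonal_iff.mpr fun i => ?_
    refine Finset.prod_nonneg fun j _ => ?_
    simpa using hG.eigenvalues_nonneg j
  exact hDpsd.mul_mul_conjTranspose_same U

private lemma trace_mul_nonpos' {P M : Matrix n n ℝ} (hP : P.PosSemidef)
    (hM : (-M).PosSemidef) : (P * M).trace ≤ 0 := by
  obtain ⟨S, hSherm, hSS⟩ : ∃ S : Matrix n n ℝ, S.IsHermitian ∧ S * S = P :=
    by open scoped MatrixOrder in
      exact ⟨CFC.sqrt P, (CFC.sqrt_nonneg P).posSemidef.1, CFC.sqrt_mul_sqrt_self P hP.nonneg⟩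
  have h1 : (P * M).trace = (S * M * S).trace := by
    rw [← hSS]; conv_rhs => rw [trace_mul_cycle]
  have h2 : (Sᴴ * (-M) * S).PosSemidef := hM.conjTranspose_mul_mul_same S
  have h3 : 0 ≤ (Sᴴ * (-M) * S).trace := psd_trace_nonneg' h2
  rw [hSherm.eq] at h3
  have h4 : S * -M * S = -(S * M * S) := by noncomm_ring
  rw [h4, trace_neg] at h3
  linarith [h1, h3]

private lemma det_updateRow_eq_sum' (A : Matrix n n ℝ) (j : n) (r : n → ℝ) :
    (A.updateRow j r).det = ∑ i, adjugate A i j * r i := by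
  have h1 : (A.updateRow j r).det = cramer Aᵀ r j := by
    rw [cramer_apply, updateCol_transpose, det_transpose]
  rw [h1, cramer_eq_adjugate_mulVec, ← adjugate_transpose]
  simp [mulVec, dotProduct, transpose_apply]

end Aux

section Quad

variable {H : Type*} [NormedAddCommGroup H] [InnerProductSpace ℝ H]

private lemma quad_form_eq' (k : ℕ) (v : Fin k → H) (T : H →L[ℝ] H) (x : Fin k → ℝ) :
    ∑ a, ∑ b, x a * (⟪T (v a), v b⟫ * x b)
      = ⟪T (∑ a, x a • v a), ∑ b, x b • v b⟫ := by
  rw [map_sum, sum_inner]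
  refine Finset.sum_congr rfl fun a _ => ?_
  rw [_root_.map_smul, inner_sum]
  refine Finset.sum_congr rfl fun b _ => ?_
  rw [real_inner_smul_left, real_inner_smul_right]
  ring

end Quad

/-- If `B` is a bounded self-adjoint negative semi-definite operator on a real Hilbert
space, then the operator `B̂⁽ᵏ⁾(v₁ ∧ ⋯ ∧ v_k) = Σ_j v₁ ∧ ⋯ ∧ B v_j ∧ ⋯ ∧ v_k` is
negative semi-definite on `k`-blades: `Σ_j det G_j ≤ 0`, where `G_j` is the Gram matrix
with the `j`-th row replaced by `(⟪B v_j, v_b⟫)_b`. -/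
theorem wedge_derivation_neg_semidef
    {H : Type*} [NormedAddCommGroup H] [InnerProductSpace ℝ H] [CompleteSpace H]
    (B : H →L[ℝ] H)
    (hB_sa : ∀ v w : H, ⟪B v, w⟫ = ⟪v, B w⟫)
    (hB_neg : ∀ v : H, ⟪B v, v⟫ ≤ 0)
    (k : ℕ) (hk : 1 ≤ k) (v : Fin k → H) :
    ∑ j : Fin k, Matrix.det (Matrix.of fun a b : Fin k =>
        if a = j then ⟪B (v j), v b⟫ else ⟪v a, v b⟫) ≤ 0 := by
  set G : Matrix (Fin k) (Fin k) ℝ := Matrix.of fun a b => ⟪v a, v b⟫ with hGdef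
  set M : Matrix (Fin k) (Fin k) ℝ := Matrix.of fun a b => ⟪B (v a), v b⟫ with hMdef
  -- each summand is a row update of the Gram matrix
  have hrow : ∀ j : Fin k, (Matrix.of fun a b : Fin k =>
      if a = j then ⟪B (v j), v b⟫ else ⟪v a, v b⟫) = G.updateRow j (M j) := by
    intro j
    ext a b
    rw [Matrix.updateRow_apply]
    by_cases h : a = j <;> simp [h, hGdef, hMdef]
  -- Gram matrix is positive semidefinite
  have hGpsd : G.PosSemidef := by
    refine Matrix.PosSemidef.of_dotProduct_mulVec_nonneg ?_ ?_
    · ext a b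
      simp [Matrix.conjTranspose_apply, hGdef, real_inner_comm]
    · intro x
      have := quad_form_eq' k v (ContinuousLinearMap.id ℝ H) x
      simp only [ContinuousLinearMap.id_apply] at this
      simp only [dotProduct, Matrix.mulVec, star_trivial, hGdef, Matrix.of_apply,
        Finset.mul_sum]
      rw [this]
      exact real_inner_self_nonneg
  -- -M is positive semidefinite
  have hMneg : (-M).PosSemidef := by
    refine Matrix.PosSemidef.of_dotProduct_mulVec_nonneg ?_ ?_
    · ext a b
      simp only [Matrix.conjTranspose_apply, Matrix.neg_apply, hMdef, Matrix.of_apply,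
        star_trivial]
      rw [hB_sa (v b) (v a), real_inner_comm]
    · intro x
      have := quad_form_eq' k v B x
      simp only [dotProduct, Matrix.mulVec, star_trivial, Matrix.neg_apply, hMdef,
        Matrix.of_apply, Finset.mul_sum]
      have h2 : ∑ a, ∑ b, x a * (-⟪B (v a), v b⟫ * x b)
          = -∑ a, ∑ b, x a * (⟪B (v a), v b⟫ * x b) := by
        rw [← Finset.sum_neg_distrib]
        refine Finset.sum_congr rfl fun a _ => ?_
        rw [← Finset.sum_neg_distrib]
        refine Finset.sum_congr rfl fun b _ => ?_
        ring
      calc (0:ℝ) ≤ -⟪B (∑ a, x a • v a), ∑ b, x b • v b⟫ := by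
            linarith [hB_neg (∑ a, x a • v a)]
        _ = ∑ a, ∑ b, x a * (-⟪B (v a), v b⟫ * x b) := by rw [h2, this]
  -- rewrite the sum as a trace
  have hsum : ∑ j : Fin k, Matrix.det (Matrix.of fun a b : Fin k =>
      if a = j then ⟪B (v j), v b⟫ else ⟪v a, v b⟫) = (Matrix.adjugate G * M).trace := by
    rw [Matrix.trace]
    simp only [Matrix.diag_apply, Matrix.mul_apply]
    rw [Finset.sum_comm]
    refine Finset.sum_congr rfl fun j _ => ?_
    rw [hrow j, det_updateRow_eq_sum' G j (M j)]
  rw [hsum]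
  exact trace_mul_nonpos' (adjugate_posSemidef' hGpsd) hMneg
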